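/- Let u, v ∈ C³(Ω) solve Δu + H_v = 0, Δv + H_u = 0 on open Ω ⊆ ℝⁿ, with p = x·∇u, q = x·∇v. Then the pointwise divergence identity holds: Σᵢ ∂/∂xᵢ[ u_{xᵢ} q - p_{xᵢ} v + v_{xᵢ} p - q_{xᵢ} u + xᵢ(2H - u H_u - v H_v) ] = 2nH + (2-n)(u H_u + v H_v) + 2 Σᵢ xᵢ H_{xᵢ}. -/

import Mathlib

open MeasureTheory Set Real
open scoped RealInnerProductSpace
noncomputable section

abbrev Euc (n : ℕ) := EuclideanSpace ℝ (Fin n)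

/-- The partial derivative of `f` in the `i`-th coordinate direction. -/
def pd {n : ℕ} (f : Euc n → ℝ) (i : Fin n) (x : Euc n) : ℝ :=
  fderiv ℝ f x (EuclideanSpace.single i 1)

/-- The Laplacian of `f`. -/
def lap {n : ℕ} (f : Euc n → ℝ) (x : Euc n) : ℝ :=
  ∑ i, pd (fun y => pd f i y) i x

/-- Partial derivative of `H(x,u,v)` with respect to `u`. -/
def Hu1 {n : ℕ} (H : Euc n → ℝ → ℝ → ℝ) (x : Euc n) (s t : ℝ) : ℝ :=
  deriv (fun s' => H x s' t) s

/-- Partial derivative of `H(x,u,v)` with respect to `v`. -/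
def Hv1 {n : ℕ} (H : Euc n → ℝ → ℝ → ℝ) (x : Euc n) (s t : ℝ) : ℝ :=
  deriv (fun t' => H x s t') t

/-- Partial derivative of `H(x,u,v)` with respect to `x_i`. -/
def Hx1 {n : ℕ} (H : Euc n → ℝ → ℝ → ℝ) (i : Fin n) (x : Euc n) (s t : ℝ) : ℝ :=
  pd (fun y => H y s t) i x

section HelperBase

variable {n : ℕ}

lemma pd_congr {f g : Euc n → ℝ} {x : Euc n} (h : f =ᶠ[nhds x] g) (i : Fin n) :
    pd f i x = pd g i x := by
  unfold pd; rw [h.fderiv_eq]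

lemma hasFDerivAt_pd' {f : Euc n → ℝ} {f' : Euc n →L[ℝ] ℝ} {x : Euc n}
    (h : HasFDerivAt f f' x) (i : Fin n) :
    pd f i x = f' (EuclideanSpace.single i 1) := by rw [pd, h.fderiv]

lemma pd_add {f g : Euc n → ℝ} {x : Euc n} (hf : DifferentiableAt ℝ f x)
    (hg : DifferentiableAt ℝ g x) (i : Fin n) :
    pd (fun y => f y + g y) i x = pd f i x + pd g i x := by
  simp [pd, fderiv_fun_add hf hg]

lemma pd_sub {f g : Euc n → ℝ} {x : Euc n} (hf : DifferentiableAt ℝ f x)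
    (hg : DifferentiableAt ℝ g x) (i : Fin n) :
    pd (fun y => f y - g y) i x = pd f i x - pd g i x := by
  simp [pd, fderiv_fun_sub hf hg]

lemma pd_mul {f g : Euc n → ℝ} {x : Euc n} (hf : DifferentiableAt ℝ f x)
    (hg : DifferentiableAt ℝ g x) (i : Fin n) :
    pd (fun y => f y * g y) i x = pd f i x * g x + f x * pd g i x := by
  simp [pd, fderiv_fun_mul hf hg]; ring

lemma pd_const_mul {f : Euc n → ℝ} {x : Euc n} (hf : DifferentiableAt ℝ f x) (c : ℝ) (i : Fin n) :
    pd (fun y => c * f y) i x = c * pd f i x := by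
  simp [pd, fderiv_const_mul hf c]

lemma pd_neg {f : Euc n → ℝ} {x : Euc n} (i : Fin n) :
    pd (fun y => -f y) i x = - pd f i x := by
  simp [pd, fderiv_neg]

lemma pd_sum {ι : Type*} {s : Finset ι} {f : ι → Euc n → ℝ} {x : Euc n}
    (hf : ∀ j ∈ s, DifferentiableAt ℝ (f j) x) (i : Fin n) :
    pd (fun y => ∑ j ∈ s, f j y) i x = ∑ j ∈ s, pd (f j) i x := by
  simp [pd, fderiv_fun_sum hf]

lemma pd_coord (j : Fin n) (i : Fin n) (x : Euc n) :
    pd (fun y => y j) i x = if i = j then 1 else 0 := by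
  have : pd (fun y : Euc n => y j) i x
      = (EuclideanSpace.proj (𝕜 := ℝ) j) (EuclideanSpace.single i 1) :=
    hasFDerivAt_pd' ((EuclideanSpace.proj (𝕜 := ℝ) j).hasFDerivAt) i
  rw [this]
  simp [EuclideanSpace.single_apply, eq_comm]

lemma coord_diff (j : Fin n) (x : Euc n) : DifferentiableAt ℝ (fun y : Euc n => y j) x :=
  (EuclideanSpace.proj (𝕜 := ℝ) j).differentiableAt

lemma coord_contDiffOn {m : WithTop ℕ∞} {s : Set (Euc n)} (j : Fin n) :
    ContDiffOn ℝ m (fun y : Euc n => y j) s :=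
  (EuclideanSpace.proj (𝕜 := ℝ) j).contDiff.contDiffOn

lemma pd_contDiffOn {f : Euc n → ℝ} {Ω : Set (Euc n)} (hΩ : IsOpen Ω) {m k : WithTop ℕ∞}
    (hf : ContDiffOn ℝ k f Ω) (hmk : m + 1 ≤ k) (i : Fin n) :
    ContDiffOn ℝ m (pd f i) Ω :=
  (hf.fderiv_of_isOpen hΩ hmk).clm_apply contDiffOn_const

lemma pd_comm {f : Euc n → ℝ} {x : Euc n} (hf : ContDiffAt ℝ 2 f x) (i j : Fin n) :
    pd (pd f i) j x = pd (pd f j) i x := by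
  have hsymm := hf.isSymmSndFDerivAt (by simp [minSmoothness_of_isRCLikeNormedField])
  have hdf : DifferentiableAt ℝ (fderiv ℝ f) x :=
    (hf.fderiv_right (m := 1) (by norm_num)).differentiableAt (by norm_num)
  have key : ∀ a b : Fin n, pd (pd f a) b x
      = fderiv ℝ (fderiv ℝ f) x (EuclideanSpace.single b 1) (EuclideanSpace.single a 1) := by
    intro a b
    have h1 : pd f a = fun y => (fderiv ℝ f y) (EuclideanSpace.single a 1) := rfl
    rw [pd, h1, fderiv_clm_apply hdf (differentiableAt_const _)]
    simp
  rw [key i j, key j i, hsymm]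

section grad

variable {Ω : Set (Euc n)} {w : Euc n → ℝ}

lemma grad_contDiffOn (hΩ : IsOpen Ω) (hw : ContDiffOn ℝ 3 w Ω) :
    ContDiffOn ℝ 2 (fun y => ∑ j, y j * pd w j y) Ω :=
  ContDiffOn.sum fun j _ => (coord_contDiffOn j).mul (pd_contDiffOn hΩ hw (by norm_num) j)

lemma da_pd1 (hΩ : IsOpen Ω) (hw : ContDiffOn ℝ 3 w Ω) {y : Euc n} (hy : y ∈ Ω) (i : Fin n) :
    DifferentiableAt ℝ (pd w i) y :=
  ((pd_contDiffOn (m := 2) hΩ hw (by norm_num) i).contDiffAt (hΩ.mem_nhds hy)).differentiableAt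
    (by norm_num)

lemma da_pd2 (hΩ : IsOpen Ω) (hw : ContDiffOn ℝ 3 w Ω) {y : Euc n} (hy : y ∈ Ω) (i j : Fin n) :
    DifferentiableAt ℝ (pd (pd w i) j) y :=
  ((pd_contDiffOn (m := 1) hΩ (pd_contDiffOn (m := 2) hΩ hw (by norm_num) i)
    (by norm_num) j).contDiffAt (hΩ.mem_nhds hy)).differentiableAt (by norm_num)

lemma pd_gradsum (hΩ : IsOpen Ω) (hw : ContDiffOn ℝ 3 w Ω) {y : Euc n} (hy : y ∈ Ω)
    (i : Fin n) :
    pd (fun z => ∑ j, z j * pd w j z) i y = pd w i y + ∑ j, y j * pd (pd w j) i y := by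
  rw [pd_sum (fun j _ => (coord_diff j y).fun_mul (da_pd1 hΩ hw hy j)) i]
  have h1 : ∀ j : Fin n, pd (fun z => z j * pd w j z) i y
      = (if i = j then 1 else 0) * pd w j y + y j * pd (pd w j) i y := by
    intro j
    rw [pd_mul (coord_diff j y) (da_pd1 hΩ hw hy j) i, pd_coord]
  rw [Finset.sum_congr rfl fun j _ => h1 j, Finset.sum_add_distrib]
  congr 1
  simp

lemma lap_gradsum (hΩ : IsOpen Ω) (hw : ContDiffOn ℝ 3 w Ω) {x : Euc n} (hx : x ∈ Ω) :
    ∑ i, pd (pd (fun z => ∑ j, z j * pd w j z) i) i x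
      = 2 * lap w x + ∑ j, x j * pd (lap w) j x := by
  have hmem := hΩ.mem_nhds hx
  have hstep : ∀ i : Fin n, pd (pd (fun z : Euc n => ∑ j, z j * pd w j z) i) i x
      = pd (pd w i) i x + (pd (pd w i) i x + ∑ j, x j * pd (pd (pd w j) i) i x) := by
    intro i
    have hev : pd (fun z : Euc n => ∑ j, z j * pd w j z) i
        =ᶠ[nhds x] fun y => pd w i y + ∑ j, y j * pd (pd w j) i y := by
      filter_upwards [hmem] with y hy using pd_gradsum hΩ hw hy i
    rw [pd_congr hev i]
    rw [pd_add (da_pd1 hΩ hw hx i)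
      (DifferentiableAt.fun_sum fun j _ => (coord_diff j x).fun_mul (da_pd2 hΩ hw hx j i)) i]
    congr 1
    rw [pd_sum (fun j _ => (coord_diff j x).fun_mul (da_pd2 hΩ hw hx j i)) i]
    have h1 : ∀ j : Fin n, pd (fun y => y j * pd (pd w j) i y) i x
        = (if i = j then 1 else 0) * pd (pd w j) i x + x j * pd (pd (pd w j) i) i x := by
      intro j
      rw [pd_mul (coord_diff j x) (da_pd2 hΩ hw hx j i) i, pd_coord]
    rw [Finset.sum_congr rfl fun j _ => h1 j, Finset.sum_add_distrib]
    congr 1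
    simp
  rw [Finset.sum_congr rfl fun i _ => hstep i]
  rw [Finset.sum_add_distrib, Finset.sum_add_distrib]
  have hswap : ∑ i : Fin n, ∑ j : Fin n, x j * pd (pd (pd w j) i) i x
      = ∑ j : Fin n, x j * pd (lap w) j x := by
    rw [Finset.sum_comm]
    refine Finset.sum_congr rfl fun j _ => ?_
    rw [← Finset.mul_sum]
    congr 1
    have hterm : ∀ i : Fin n, pd (pd (pd w j) i) i x = pd (pd (pd w i) i) j x := by
      intro i
      have hev : pd (pd w j) i =ᶠ[nhds x] pd (pd w i) j := by
        filter_upwards [hmem] with y hy using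
          pd_comm ((hw.contDiffAt (hΩ.mem_nhds hy)).of_le (by norm_num)) j i
      rw [pd_congr hev i]
      exact pd_comm ((pd_contDiffOn (m := 2) hΩ hw (by norm_num) i).contDiffAt hmem) j i
    rw [Finset.sum_congr rfl fun i _ => hterm i]
    have hlapw : lap w = fun y => ∑ i, pd (pd w i) i y := rfl
    rw [hlapw, pd_sum (fun i _ => da_pd2 hΩ hw hx i i) j]
  rw [hswap]
  have hlapx : lap w x = ∑ i, pd (pd w i) i x := rfl
  rw [hlapx]; ring
end grad


section HelperChain

variable {H : Euc n → ℝ → ℝ → ℝ}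

lemma hu1_eq (hH : ContDiff ℝ 2 (fun p : Euc n × ℝ × ℝ => H p.1 p.2.1 p.2.2))
    (x : Euc n) (s t : ℝ) :
    Hu1 H x s t = fderiv ℝ (fun p : Euc n × ℝ × ℝ => H p.1 p.2.1 p.2.2) (x, s, t)
      (0, 1, 0) := by
  set F := fun p : Euc n × ℝ × ℝ => H p.1 p.2.1 p.2.2 with hF
  have hd : HasFDerivAt F (fderiv ℝ F (x, s, t)) (x, s, t) :=
    ((hH.differentiable (by norm_num)) _).hasFDerivAt
  have hc : HasDerivAt (fun s' : ℝ => ((x, s', t) : Euc n × ℝ × ℝ)) (0, 1, 0) s :=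
    (hasDerivAt_const s x).prodMk ((hasDerivAt_id s).prodMk (hasDerivAt_const s t))
  have h3 : HasDerivAt (fun s' : ℝ => F (x, s', t)) ((fderiv ℝ F (x, s, t)) (0, 1, 0)) s :=
    by have := hd.comp_hasDerivAt s hc; exact this
  have h2 : Hu1 H x s t = deriv (fun s' : ℝ => F (x, s', t)) s := rfl
  rw [h2, h3.deriv]

lemma hv1_eq (hH : ContDiff ℝ 2 (fun p : Euc n × ℝ × ℝ => H p.1 p.2.1 p.2.2))
    (x : Euc n) (s t : ℝ) :
    Hv1 H x s t = fderiv ℝ (fun p : Euc n × ℝ × ℝ => H p.1 p.2.1 p.2.2) (x, s, t)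
      (0, 0, 1) := by
  set F := fun p : Euc n × ℝ × ℝ => H p.1 p.2.1 p.2.2 with hF
  have hd : HasFDerivAt F (fderiv ℝ F (x, s, t)) (x, s, t) :=
    ((hH.differentiable (by norm_num)) _).hasFDerivAt
  have hc : HasDerivAt (fun t' : ℝ => ((x, s, t') : Euc n × ℝ × ℝ)) (0, 0, 1) t :=
    (hasDerivAt_const t x).prodMk ((hasDerivAt_const t s).prodMk (hasDerivAt_id t))
  have h3 : HasDerivAt (fun t' : ℝ => F (x, s, t')) ((fderiv ℝ F (x, s, t)) (0, 0, 1)) t :=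
    by have := hd.comp_hasDerivAt t hc; exact this
  have h2 : Hv1 H x s t = deriv (fun t' : ℝ => F (x, s, t')) t := rfl
  rw [h2, h3.deriv]

lemma hx1_eq (hH : ContDiff ℝ 2 (fun p : Euc n × ℝ × ℝ => H p.1 p.2.1 p.2.2))
    (i : Fin n) (x : Euc n) (s t : ℝ) :
    Hx1 H i x s t = fderiv ℝ (fun p : Euc n × ℝ × ℝ => H p.1 p.2.1 p.2.2) (x, s, t)
      (EuclideanSpace.single i 1, 0, 0) := by
  set F := fun p : Euc n × ℝ × ℝ => H p.1 p.2.1 p.2.2 with hF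
  have hd : HasFDerivAt F (fderiv ℝ F (x, s, t)) (x, s, t) :=
    ((hH.differentiable (by norm_num)) _).hasFDerivAt
  have hc : HasFDerivAt (fun y : Euc n => ((y, s, t) : Euc n × ℝ × ℝ))
      ((ContinuousLinearMap.id ℝ (Euc n)).prod 0) x :=
    (hasFDerivAt_id x).prodMk (hasFDerivAt_const (s, t) x)
  have hcomp : HasFDerivAt (fun y : Euc n => F (y, s, t))
      ((fderiv ℝ F (x, s, t)).comp ((ContinuousLinearMap.id ℝ (Euc n)).prod 0)) x :=
    by have := hd.comp x hc; exact this
  have h2 : Hx1 H i x s t = pd (fun y : Euc n => F (y, s, t)) i x := rfl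
  rw [h2, hasFDerivAt_pd' hcomp i]
  rfl

lemma pd_compH (hH : ContDiff ℝ 2 (fun p : Euc n × ℝ × ℝ => H p.1 p.2.1 p.2.2))
    {u v : Euc n → ℝ} {x : Euc n} (hu : DifferentiableAt ℝ u x)
    (hv : DifferentiableAt ℝ v x) (i : Fin n) :
    pd (fun y => H y (u y) (v y)) i x =
      Hx1 H i x (u x) (v x) + Hu1 H x (u x) (v x) * pd u i x
        + Hv1 H x (u x) (v x) * pd v i x := by
  set F := fun p : Euc n × ℝ × ℝ => H p.1 p.2.1 p.2.2 with hF
  have hd : HasFDerivAt F (fderiv ℝ F (x, u x, v x)) (x, u x, v x) :=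
    ((hH.differentiable (by norm_num)) _).hasFDerivAt
  have hg : HasFDerivAt (fun y : Euc n => ((y, u y, v y) : Euc n × ℝ × ℝ))
      ((ContinuousLinearMap.id ℝ (Euc n)).prod
        ((fderiv ℝ u x).prod (fderiv ℝ v x))) x :=
    (hasFDerivAt_id x).prodMk (hu.hasFDerivAt.prodMk hv.hasFDerivAt)
  have hcomp : HasFDerivAt (fun y => H y (u y) (v y))
      ((fderiv ℝ F (x, u x, v x)).comp ((ContinuousLinearMap.id ℝ (Euc n)).prod
        ((fderiv ℝ u x).prod (fderiv ℝ v x)))) x := by have := hd.comp x hg; exact this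
  have h2 : pd (fun y => H y (u y) (v y)) i x
      = fderiv ℝ F (x, u x, v x) (EuclideanSpace.single i 1, pd u i x, pd v i x) := by
    rw [hasFDerivAt_pd' hcomp i]; rfl
  rw [h2, hu1_eq hH, hv1_eq hH, hx1_eq hH]
  have hsplit : ((EuclideanSpace.single i 1, pd u i x, pd v i x) : Euc n × ℝ × ℝ)
      = (EuclideanSpace.single i 1, (0:ℝ), (0:ℝ)) + pd u i x • ((0 : Euc n), (1:ℝ), (0:ℝ))
        + pd v i x • ((0 : Euc n), (0:ℝ), (1:ℝ)) := by
    simp [Prod.ext_iff]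
  rw [hsplit, map_add, map_add, ContinuousLinearMap.map_smul, ContinuousLinearMap.map_smul,
    smul_eq_mul, smul_eq_mul]
  ring

lemma hU_eq (hH : ContDiff ℝ 2 (fun p : Euc n × ℝ × ℝ => H p.1 p.2.1 p.2.2))
    (u v : Euc n → ℝ) :
    (fun y => Hu1 H y (u y) (v y)) = (fun p : Euc n × ℝ × ℝ =>
      fderiv ℝ (fun p : Euc n × ℝ × ℝ => H p.1 p.2.1 p.2.2) p (0, 1, 0))
        ∘ (fun y => (y, u y, v y)) := by
  funext y; exact hu1_eq hH y (u y) (v y)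

lemma hV_eq (hH : ContDiff ℝ 2 (fun p : Euc n × ℝ × ℝ => H p.1 p.2.1 p.2.2))
    (u v : Euc n → ℝ) :
    (fun y => Hv1 H y (u y) (v y)) = (fun p : Euc n × ℝ × ℝ =>
      fderiv ℝ (fun p : Euc n × ℝ × ℝ => H p.1 p.2.1 p.2.2) p (0, 0, 1))
        ∘ (fun y => (y, u y, v y)) := by
  funext y; exact hv1_eq hH y (u y) (v y)

lemma hU_diff (hH : ContDiff ℝ 2 (fun p : Euc n × ℝ × ℝ => H p.1 p.2.1 p.2.2))
    {u v : Euc n → ℝ} {x : Euc n} (hu : DifferentiableAt ℝ u x)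
    (hv : DifferentiableAt ℝ v x) :
    DifferentiableAt ℝ (fun y => Hu1 H y (u y) (v y)) x := by
  rw [hU_eq hH u v]
  have houter : ContDiff ℝ 1 (fun p : Euc n × ℝ × ℝ =>
      fderiv ℝ (fun p : Euc n × ℝ × ℝ => H p.1 p.2.1 p.2.2) p (0, 1, 0)) :=
    (hH.fderiv_right (by norm_num)).clm_apply contDiff_const
  exact ((houter.differentiable (by norm_num)) _).comp x
    ((differentiableAt_id.prodMk (hu.prodMk hv)))

lemma hV_diff (hH : ContDiff ℝ 2 (fun p : Euc n × ℝ × ℝ => H p.1 p.2.1 p.2.2))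
    {u v : Euc n → ℝ} {x : Euc n} (hu : DifferentiableAt ℝ u x)
    (hv : DifferentiableAt ℝ v x) :
    DifferentiableAt ℝ (fun y => Hv1 H y (u y) (v y)) x := by
  rw [hV_eq hH u v]
  have houter : ContDiff ℝ 1 (fun p : Euc n × ℝ × ℝ =>
      fderiv ℝ (fun p : Euc n × ℝ × ℝ => H p.1 p.2.1 p.2.2) p (0, 0, 1)) :=
    (hH.fderiv_right (by norm_num)).clm_apply contDiff_const
  exact ((houter.differentiable (by norm_num)) _).comp x
    ((differentiableAt_id.prodMk (hu.prodMk hv)))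

lemma h_diff (hH : ContDiff ℝ 2 (fun p : Euc n × ℝ × ℝ => H p.1 p.2.1 p.2.2))
    {u v : Euc n → ℝ} {x : Euc n} (hu : DifferentiableAt ℝ u x)
    (hv : DifferentiableAt ℝ v x) :
    DifferentiableAt ℝ (fun y => H y (u y) (v y)) x := by
  have : (fun y => H y (u y) (v y)) = (fun p : Euc n × ℝ × ℝ => H p.1 p.2.1 p.2.2)
      ∘ (fun y => (y, u y, v y)) := rfl
  rw [this]
  exact ((hH.differentiable (by norm_num)) _).comp x
    ((differentiableAt_id.prodMk (hu.prodMk hv)))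


end HelperChain

/-- pointwise divergence (differential) form of the Pohozaev identity for
the Hamiltonian system, with `p = x·∇u`, `q = x·∇v`. -/
theorem stmt15 {n : ℕ} (Ω : Set (Euc n)) (hΩ : IsOpen Ω)
    (H : Euc n → ℝ → ℝ → ℝ)
    (hH : ContDiff ℝ 2 (fun p : Euc n × ℝ × ℝ => H p.1 p.2.1 p.2.2))
    (u v : Euc n → ℝ) (hu : ContDiffOn ℝ 3 u Ω) (hv : ContDiffOn ℝ 3 v Ω)
    (hequ : ∀ x ∈ Ω, lap u x + Hv1 H x (u x) (v x) = 0)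
    (heqv : ∀ x ∈ Ω, lap v x + Hu1 H x (u x) (v x) = 0)
    (P Q : Euc n → ℝ)
    (hP : P = fun x => ∑ i, x i * pd u i x) (hQ : Q = fun x => ∑ i, x i * pd v i x) :
    ∀ x ∈ Ω,
      ∑ i, pd (fun y =>
          pd u i y * Q y - pd P i y * v y + pd v i y * P y - pd Q i y * u y
            + y i * (2 * H y (u y) (v y) - u y * Hu1 H y (u y) (v y)
                - v y * Hv1 H y (u y) (v y))) i x
        = 2 * n * H x (u x) (v x)
            + (2 - n) * (u x * Hu1 H x (u x) (v x) + v x * Hv1 H x (u x) (v x))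
            + 2 * ∑ i, x i * Hx1 H i x (u x) (v x) := by
  intro x hx
  simp only [hP, hQ]
  have hmem : Ω ∈ nhds x := hΩ.mem_nhds hx
  have du : DifferentiableAt ℝ u x := (hu.contDiffAt hmem).differentiableAt (by norm_num)
  have dv : DifferentiableAt ℝ v x := (hv.contDiffAt hmem).differentiableAt (by norm_num)
  have dpu : ∀ i, DifferentiableAt ℝ (pd u i) x := fun i => da_pd1 hΩ hu hx i
  have dpv : ∀ i, DifferentiableAt ℝ (pd v i) x := fun i => da_pd1 hΩ hv hx i
  have dP : DifferentiableAt ℝ (fun y : Euc n => ∑ j, y j * pd u j y) x :=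
    ((grad_contDiffOn hΩ hu).contDiffAt hmem).differentiableAt (by norm_num)
  have dQ : DifferentiableAt ℝ (fun y : Euc n => ∑ j, y j * pd v j y) x :=
    ((grad_contDiffOn hΩ hv).contDiffAt hmem).differentiableAt (by norm_num)
  have dpP : ∀ i, DifferentiableAt ℝ (pd (fun y : Euc n => ∑ j, y j * pd u j y) i) x :=
    fun i => ((pd_contDiffOn (m := 1) hΩ (grad_contDiffOn hΩ hu) (by norm_num) i).contDiffAt
      hmem).differentiableAt (by norm_num)
  have dpQ : ∀ i, DifferentiableAt ℝ (pd (fun y : Euc n => ∑ j, y j * pd v j y) i) x :=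
    fun i => ((pd_contDiffOn (m := 1) hΩ (grad_contDiffOn hΩ hv) (by norm_num) i).contDiffAt
      hmem).differentiableAt (by norm_num)
  have dh : DifferentiableAt ℝ (fun y => H y (u y) (v y)) x := h_diff hH du dv
  have dhU : DifferentiableAt ℝ (fun y => Hu1 H y (u y) (v y)) x := hU_diff hH du dv
  have dhV : DifferentiableAt ℝ (fun y => Hv1 H y (u y) (v y)) x := hV_diff hH du dv
  have dR : DifferentiableAt ℝ (fun y => 2 * H y (u y) (v y) - u y * Hu1 H y (u y) (v y)
      - v y * Hv1 H y (u y) (v y)) x := ((dh.const_mul 2).sub (du.mul dhU)).sub (dv.mul dhV)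
  have hpdP : ∀ i, pd (fun y : Euc n => ∑ j, y j * pd u j y) i x
      = pd u i x + ∑ j, x j * pd (pd u j) i x := fun i => pd_gradsum hΩ hu hx i
  have hpdQ : ∀ i, pd (fun y : Euc n => ∑ j, y j * pd v j y) i x
      = pd v i x + ∑ j, x j * pd (pd v j) i x := fun i => pd_gradsum hΩ hv hx i
  have hlapu : lap u x = -(Hv1 H x (u x) (v x)) := by have := hequ x hx; linarith
  have hlapv : lap v x = -(Hu1 H x (u x) (v x)) := by have := heqv x hx; linarith
  have hsum2u : ∑ i, pd (pd u i) i x = -(Hv1 H x (u x) (v x)) := by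
    have h0 : lap u x = ∑ i, pd (pd u i) i x := rfl
    rw [← h0]; exact hlapu
  have hsum2v : ∑ i, pd (pd v i) i x = -(Hu1 H x (u x) (v x)) := by
    have h0 : lap v x = ∑ i, pd (pd v i) i x := rfl
    rw [← h0]; exact hlapv
  have hpdlapu : ∀ j, pd (lap u) j x = - pd (fun y => Hv1 H y (u y) (v y)) j x := by
    intro j
    have hev : lap u =ᶠ[nhds x] fun y => -(Hv1 H y (u y) (v y)) := by
      filter_upwards [hmem] with y hy
      have := hequ y hy; linarith
    rw [pd_congr hev j]
    exact pd_neg j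
  have hpdlapv : ∀ j, pd (lap v) j x = - pd (fun y => Hu1 H y (u y) (v y)) j x := by
    intro j
    have hev : lap v =ᶠ[nhds x] fun y => -(Hu1 H y (u y) (v y)) := by
      filter_upwards [hmem] with y hy
      have := heqv y hy; linarith
    rw [pd_congr hev j]
    exact pd_neg j
  have hlapP : ∑ i, pd (pd (fun y : Euc n => ∑ j, y j * pd u j y) i) i x
      = -(2 * Hv1 H x (u x) (v x)) - ∑ j, x j * pd (fun y => Hv1 H y (u y) (v y)) j x := by
    rw [lap_gradsum hΩ hu hx, hlapu]
    have h1 : ∑ j, x j * pd (lap u) j x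
        = -∑ j, x j * pd (fun y => Hv1 H y (u y) (v y)) j x := by
      rw [← Finset.sum_neg_distrib]
      exact Finset.sum_congr rfl fun j _ => by rw [hpdlapu j]; ring
    rw [h1]; ring
  have hlapQ : ∑ i, pd (pd (fun y : Euc n => ∑ j, y j * pd v j y) i) i x
      = -(2 * Hu1 H x (u x) (v x)) - ∑ j, x j * pd (fun y => Hu1 H y (u y) (v y)) j x := by
    rw [lap_gradsum hΩ hv hx, hlapv]
    have h1 : ∑ j, x j * pd (lap v) j x
        = -∑ j, x j * pd (fun y => Hu1 H y (u y) (v y)) j x := by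
      rw [← Finset.sum_neg_distrib]
      exact Finset.sum_congr rfl fun j _ => by rw [hpdlapv j]; ring
    rw [h1]; ring
  have hpdh : ∀ i, pd (fun y => H y (u y) (v y)) i x
      = Hx1 H i x (u x) (v x) + Hu1 H x (u x) (v x) * pd u i x
        + Hv1 H x (u x) (v x) * pd v i x := fun i => pd_compH hH du dv i
  have key : ∀ i : Fin n,
      pd (fun y => pd u i y * (∑ j, y j * pd v j y)
          - pd (fun z : Euc n => ∑ j, z j * pd u j z) i y * v y
          + pd v i y * (∑ j, y j * pd u j y)
          - pd (fun z : Euc n => ∑ j, z j * pd v j z) i y * u y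
          + y i * (2 * H y (u y) (v y) - u y * Hu1 H y (u y) (v y)
              - v y * Hv1 H y (u y) (v y))) i x
        = pd (pd u i) i x * (∑ j, x j * pd v j x)
          + pd (pd v i) i x * (∑ j, x j * pd u j x)
          - pd (pd (fun z : Euc n => ∑ j, z j * pd u j z) i) i x * v x
          - pd (pd (fun z : Euc n => ∑ j, z j * pd v j z) i) i x * u x
          + (2 * H x (u x) (v x) - u x * Hu1 H x (u x) (v x) - v x * Hv1 H x (u x) (v x))
          + (2 * (x i * Hx1 H i x (u x) (v x))
             + Hu1 H x (u x) (v x) * (x i * pd u i x)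
             + Hv1 H x (u x) (v x) * (x i * pd v i x)
             - u x * (x i * pd (fun y => Hu1 H y (u y) (v y)) i x)
             - v x * (x i * pd (fun y => Hv1 H y (u y) (v y)) i x)) := by
    intro i
    have d1 : DifferentiableAt ℝ (fun y => pd u i y * ∑ j, y j * pd v j y) x :=
      (dpu i).mul dQ
    have d2 : DifferentiableAt ℝ
        (fun y => pd (fun z : Euc n => ∑ j, z j * pd u j z) i y * v y) x := (dpP i).mul dv
    have d3 : DifferentiableAt ℝ (fun y => pd v i y * ∑ j, y j * pd u j y) x :=
      (dpv i).mul dP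
    have d4 : DifferentiableAt ℝ
        (fun y => pd (fun z : Euc n => ∑ j, z j * pd v j z) i y * u y) x := (dpQ i).mul du
    have d5 : DifferentiableAt ℝ (fun y => y i * (2 * H y (u y) (v y)
        - u y * Hu1 H y (u y) (v y) - v y * Hv1 H y (u y) (v y))) x :=
      (coord_diff i x).mul dR
    rw [pd_add (((d1.fun_sub d2).fun_add d3).fun_sub d4) d5 i,
      pd_sub ((d1.fun_sub d2).fun_add d3) d4 i, pd_add (d1.fun_sub d2) d3 i, pd_sub d1 d2 i,
      pd_mul (dpu i) dQ i, pd_mul (dpP i) dv i, pd_mul (dpv i) dP i, pd_mul (dpQ i) du i,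
      pd_mul (coord_diff i x) dR i, pd_coord i i x,
      pd_sub ((dh.const_mul 2).fun_sub (du.fun_mul dhU)) (dv.fun_mul dhV) i,
      pd_sub (dh.const_mul 2) (du.fun_mul dhU) i,
      pd_const_mul dh 2 i, pd_mul du dhU i, pd_mul dv dhV i,
      hpdP i, hpdQ i, hpdh i]
    simp only [if_pos rfl, if_true]
    ring
  rw [Finset.sum_congr rfl fun i _ => key i]
  simp only [Finset.sum_add_distrib, Finset.sum_sub_distrib, ← Finset.sum_mul,
    ← Finset.mul_sum, Finset.sum_const, Finset.card_univ, Fintype.card_fin, nsmul_eq_mul]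
  rw [hsum2u, hsum2v, hlapP, hlapQ]
  ring
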